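/- arXiv:2412.07957 — 2 statements merged into one kernel-verified Lean document; each statement's English description precedes it below -/
import Mathlib

section
/- Under the setting of the previous statement with Σ_k min(aki, akj)^α > 0, the limiting tail dependence coefficient of (Ri, Rj) equals χ = lim_{x→∞} P(Rj > x | Ri > x) = (Σ_k min(aki, akj)^α) / (Σ_k aki^α) > 0, so Ri and Rj are asymptotically dependent. -/
open MeasureTheory Filter ProbabilityTheory

lemma aux_scaled {Ω : Type*} [MeasurableSpace Ω] (P : Measure Ω) [IsProbabilityMeasure P]
    (S : Ω → ℝ) (C α : ℝ) (hC : 0 < C) (hα0 : 0 < α)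
    (htail : Tendsto (fun x : ℝ => (P {ω | x < S ω}).toReal / (2 * C * x ^ (-α))) atTop (nhds 1))
    (c t : ℝ) (hc : 0 ≤ c) (ht : 0 < t) :
    Tendsto (fun x : ℝ => (P {ω | t * x < c * S ω}).toReal / (2 * C * x ^ (-α)))
      atTop (nhds (c ^ α * t ^ (-α))) := by
  rcases eq_or_lt_of_le hc with hc0 | hc0
  · have : c ^ α * t ^ (-α) = 0 := by
      rw [← hc0, Real.zero_rpow (ne_of_gt hα0), zero_mul]
    rw [this]
    apply Tendsto.congr' _ tendsto_const_nhds
    filter_upwards [eventually_gt_atTop 0] with x hx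
    have : {ω : Ω | t * x < c * S ω} = ∅ := by
      ext ω; simp only [Set.mem_setOf_eq, Set.mem_empty_iff_false, iff_false, not_lt, ← hc0,
        zero_mul]
      positivity
    rw [this]; simp
  · -- c > 0
    have hcomp : Tendsto (fun x : ℝ => t * x / c) atTop atTop := by
      apply Tendsto.atTop_div_const hc0
      exact Tendsto.const_mul_atTop ht tendsto_id
    have h1 : Tendsto (fun x : ℝ => (P {ω | t * x / c < S ω}).toReal /
        (2 * C * (t * x / c) ^ (-α))) atTop (nhds 1) := htail.comp hcomp
    have h2 := h1.mul_const (c ^ α * t ^ (-α))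
    rw [one_mul] at h2
    apply h2.congr'
    filter_upwards [eventually_gt_atTop 0] with x hx
    have hx' : (0:ℝ) < t * x / c := by positivity
    have hset : {ω : Ω | t * x / c < S ω} = {ω : Ω | t * x < c * S ω} := by
      ext ω; simp only [Set.mem_setOf_eq, div_lt_iff₀ hc0]
      constructor <;> intro h <;> linarith [h]
    have hpow : (t * x / c) ^ (-α) = (t / c) ^ (-α) * x ^ (-α) := by
      rw [show t * x / c = (t / c) * x by ring,
        Real.mul_rpow (by positivity) (le_of_lt hx)]
    have htc : (t / c) ^ (-α) = t ^ (-α) * c ^ α := by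
      rw [Real.div_rpow (le_of_lt ht) (le_of_lt hc0), Real.rpow_neg (le_of_lt ht),
        Real.rpow_neg (le_of_lt hc0)]
      field_simp
    rw [hset, hpow, htc]
    have hxne : x ^ (-α) ≠ 0 := by positivity
    have hcne : c ^ α ≠ 0 := by positivity
    have htne : t ^ (-α) ≠ 0 := by positivity
    field_simp

lemma aux_denom_zero (C α : ℝ) (hα0 : 0 < α) :
    Tendsto (fun x : ℝ => 2 * C * x ^ (-α)) atTop (nhds 0) := by
  have := tendsto_rpow_neg_atTop hα0
  have h := this.const_mul (2 * C)
  simpa using h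

lemma aux_zero {Ω : Type*} [MeasurableSpace Ω] (P : Measure Ω) [IsProbabilityMeasure P]
    (S : Ω → ℝ) (C α : ℝ) (hC : 0 < C) (hα0 : 0 < α)
    (htail : Tendsto (fun x : ℝ => (P {ω | x < S ω}).toReal / (2 * C * x ^ (-α))) atTop (nhds 1))
    (c t : ℝ) (hc : 0 ≤ c) (ht : 0 < t) :
    Tendsto (fun x : ℝ => (P {ω | t * x < c * S ω}).toReal) atTop (nhds 0) := by
  have h1 := (aux_scaled P S C α hC hα0 htail c t hc ht).mul (aux_denom_zero C α hα0)
  rw [mul_zero] at h1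
  apply h1.congr'
  filter_upwards [eventually_gt_atTop 0] with x hx
  have : 2 * C * x ^ (-α) ≠ 0 := by positivity
  field_simp

lemma aux_cross {Ω : Type*} [MeasurableSpace Ω] (P : Measure Ω) [IsProbabilityMeasure P]
    (Sk Sl : Ω → ℝ) (hkl : IndepFun Sk Sl P) (C α : ℝ) (hC : 0 < C) (hα0 : 0 < α)
    (htailk : Tendsto (fun x : ℝ => (P {ω | x < Sk ω}).toReal / (2 * C * x ^ (-α))) atTop (nhds 1))
    (htaill : Tendsto (fun x : ℝ => (P {ω | x < Sl ω}).toReal / (2 * C * x ^ (-α))) atTop (nhds 1))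
    (c d t u : ℝ) (hc : 0 ≤ c) (hd : 0 ≤ d) (ht : 0 < t) (hu : 0 < u) :
    Tendsto (fun x : ℝ => (P ({ω | t * x < c * Sk ω} ∩ {ω | u * x < d * Sl ω})).toReal /
      (2 * C * x ^ (-α))) atTop (nhds 0) := by
  have hmul : ∀ x : ℝ, (P ({ω | t * x < c * Sk ω} ∩ {ω | u * x < d * Sl ω})).toReal =
      (P {ω | t * x < c * Sk ω}).toReal * (P {ω | u * x < d * Sl ω}).toReal := by
    intro x
    have hA : {ω | t * x < c * Sk ω} = Sk ⁻¹' {y | t * x < c * y} := rfl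
    have hB : {ω | u * x < d * Sl ω} = Sl ⁻¹' {y | u * x < d * y} := rfl
    have hmA : MeasurableSet {y : ℝ | t * x < c * y} :=
      measurableSet_lt measurable_const (measurable_const.mul measurable_id)
    have hmB : MeasurableSet {y : ℝ | u * x < d * y} :=
      measurableSet_lt measurable_const (measurable_const.mul measurable_id)
    rw [hA, hB, hkl.measure_inter_preimage_eq_mul _ _ hmA hmB, ENNReal.toReal_mul]
  have h1 := (aux_scaled P Sk C α hC hα0 htailk c t hc ht).mul
    (aux_zero P Sl C α hC hα0 htaill d u hd hu)
  rw [mul_zero] at h1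
  apply h1.congr
  intro x
  rw [hmul]
  ring

lemma bonferroni {Ω : Type*} [MeasurableSpace Ω] (P : Measure Ω) {ι : Type*} [DecidableEq ι]
    (A : ι → Set Ω) (hA : ∀ k, MeasurableSet (A k)) (s : Finset ι) :
    ∑ k ∈ s, P (A k) ≤ P (⋃ k ∈ s, A k) +
      ∑ k ∈ s, ∑ l ∈ s, (if k = l then 0 else P (A k ∩ A l)) := by
  classical
  induction s using Finset.induction_on with
  | empty => simp
  | @insert n s hn ih =>
    rw [Finset.sum_insert hn]
    have hunion : (⋃ k ∈ insert n s, A k) = A n ∪ ⋃ k ∈ s, A k := Finset.set_biUnion_insert _ _ _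
    have hinter : A n ∩ ⋃ k ∈ s, A k = ⋃ k ∈ s, (A n ∩ A k) := by
      rw [Set.inter_iUnion₂]
    have hkey : P (A n ∪ ⋃ k ∈ s, A k) + P (A n ∩ ⋃ k ∈ s, A k)
        = P (A n) + P (⋃ k ∈ s, A k) :=
      measure_union_add_inter' (hA n) _
    have hintle : P (A n ∩ ⋃ k ∈ s, A k) ≤ ∑ k ∈ s, P (A n ∩ A k) := by
      rw [hinter]
      exact measure_biUnion_finset_le s _
    have hpairs : ∑ k ∈ insert n s, ∑ l ∈ insert n s, (if k = l then 0 else P (A k ∩ A l))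
        = (∑ l ∈ s, P (A n ∩ A l)) + ((∑ k ∈ s, P (A k ∩ A n)) +
          ∑ k ∈ s, ∑ l ∈ s, (if k = l then 0 else P (A k ∩ A l))) := by
      rw [Finset.sum_insert hn]
      congr 1
      · rw [Finset.sum_insert hn, if_pos rfl, zero_add]
        exact Finset.sum_congr rfl fun l hl => if_neg (by rintro rfl; exact hn hl)
      · rw [← Finset.sum_add_distrib]
        apply Finset.sum_congr rfl fun k hk => ?_
        rw [Finset.sum_insert hn, if_neg (by rintro rfl; exact hn hk)]
    calc P (A n) + ∑ k ∈ s, P (A k)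
        ≤ P (A n) + (P (⋃ k ∈ s, A k) +
            ∑ k ∈ s, ∑ l ∈ s, (if k = l then 0 else P (A k ∩ A l))) := by
          exact add_le_add_right ih _
      _ = (P (A n) + P (⋃ k ∈ s, A k)) +
            ∑ k ∈ s, ∑ l ∈ s, (if k = l then 0 else P (A k ∩ A l)) := by ring
      _ = (P (A n ∪ ⋃ k ∈ s, A k) + P (A n ∩ ⋃ k ∈ s, A k)) +
            ∑ k ∈ s, ∑ l ∈ s, (if k = l then 0 else P (A k ∩ A l)) := by rw [hkey]
      _ ≤ P (⋃ k ∈ insert n s, A k) + ((∑ k ∈ s, P (A n ∩ A k)) +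
            ∑ k ∈ s, ∑ l ∈ s, (if k = l then 0 else P (A k ∩ A l))) := by
          rw [hunion, add_assoc]
          exact add_le_add_right (add_le_add_left hintle _) _
      _ ≤ P (⋃ k ∈ insert n s, A k) +
            ∑ k ∈ insert n s, ∑ l ∈ insert n s, (if k = l then 0 else P (A k ∩ A l)) := by
          rw [hpairs]
          exact add_le_add_right (add_le_add_right (le_add_of_nonneg_left zero_le) _) _

lemma det_incl {K : ℕ} (a b s : Fin K → ℝ) (ha : ∀ k, 0 ≤ a k) (hb : ∀ k, 0 ≤ b k)
    (hs : ∀ k, 0 ≤ s k) (x ε : ℝ) (hx : 0 < x) (hε0 : 0 < ε) (hε1 : ε < 1)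
    (hA : x < ∑ k, a k * s k) (hB : x < ∑ k, b k * s k) :
    (∃ k, (1 - ε) * x < min (a k) (b k) * s k) ∨
    (∃ k l, k ≠ l ∧ (ε / K) * x < max (a k) (b k) * s k ∧
      (ε / K) * x < max (a l) (b l) * s l) := by
  classical
  have hK : 0 < K := by
    rcases Nat.eq_zero_or_pos K with h | h
    · subst h; simp at hA; linarith
    · exact h
  set Big : Finset (Fin K) := Finset.univ.filter (fun k => (ε / K) * x < max (a k) (b k) * s k)
    with hBig
  by_cases hcard : 1 < Big.card
  · right
    obtain ⟨k, hk, l, hl, hkl⟩ := Finset.one_lt_card.mp hcard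
    rw [hBig, Finset.mem_filter] at hk hl
    exact ⟨k, l, hkl, hk.2, hl.2⟩
  · left
    push_neg at hcard
    have hKr : (0:ℝ) < (K:ℝ) := by exact_mod_cast hK
    have hne : Big.Nonempty := by
      by_contra hemp
      rw [Finset.not_nonempty_iff_eq_empty] at hemp
      have hbound : ∀ k : Fin K, a k * s k ≤ (ε / K) * x := by
        intro k
        have hk : k ∉ Big := by rw [hemp]; exact Finset.notMem_empty k
        rw [hBig, Finset.mem_filter] at hk
        push_neg at hk
        have := hk (Finset.mem_univ k)
        calc a k * s k ≤ max (a k) (b k) * s k :=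
              mul_le_mul_of_nonneg_right (le_max_left _ _) (hs k)
          _ ≤ (ε / K) * x := this
      have : ∑ k, a k * s k ≤ ∑ _k : Fin K, (ε / K) * x :=
        Finset.sum_le_sum fun k _ => hbound k
      rw [Finset.sum_const, Finset.card_univ, Fintype.card_fin, nsmul_eq_mul] at this
      have : ∑ k, a k * s k ≤ ε * x := by
        rw [show (K:ℝ) * ((ε / K) * x) = ε * x by field_simp] at this
        exact this
      nlinarith
    obtain ⟨k0, hk0⟩ := hne
    refine ⟨k0, ?_⟩
    have hrest : ∀ c : Fin K → ℝ, (∀ k, c k ≤ max (a k) (b k)) → (x < ∑ k, c k * s k) →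
        (1 - ε) * x < c k0 * s k0 := by
      intro c hc hsum
      have hsmall : ∀ k ∈ Finset.univ.erase k0, c k * s k ≤ (ε / K) * x := by
        intro k hk
        have hkne : k ≠ k0 := Finset.ne_of_mem_erase hk
        have hknB : k ∉ Big := by
          intro hkB
          have : 1 < Big.card := Finset.one_lt_card.mpr ⟨k, hkB, k0, hk0, hkne⟩
          omega
        rw [hBig, Finset.mem_filter] at hknB
        push_neg at hknB
        have := hknB (Finset.mem_univ k)
        calc c k * s k ≤ max (a k) (b k) * s k :=
              mul_le_mul_of_nonneg_right (hc k) (hs k)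
          _ ≤ (ε / K) * x := this
      have hsplit : ∑ k ∈ Finset.univ.erase k0, c k * s k + c k0 * s k0 = ∑ k, c k * s k :=
        Finset.sum_erase_add _ _ (Finset.mem_univ k0)
      have hsum_rest : ∑ k ∈ Finset.univ.erase k0, c k * s k ≤ ε * x := by
        have h1 : ∑ k ∈ Finset.univ.erase k0, c k * s k ≤
            (Finset.univ.erase k0).card • ((ε / K) * x) :=
          Finset.sum_le_card_nsmul _ _ _ hsmall
        have h2 : ((Finset.univ.erase k0).card : ℝ) ≤ (K : ℝ) := by
          have := Finset.card_erase_le (a := k0) (s := (Finset.univ : Finset (Fin K)))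
          rw [Finset.card_univ, Fintype.card_fin] at this
          exact_mod_cast this
        rw [nsmul_eq_mul] at h1
        have hεxK : (0:ℝ) ≤ (ε / K) * x := by positivity
        calc ∑ k ∈ Finset.univ.erase k0, c k * s k
            ≤ ((Finset.univ.erase k0).card : ℝ) * ((ε / K) * x) := h1
          _ ≤ (K : ℝ) * ((ε / K) * x) := mul_le_mul_of_nonneg_right h2 hεxK
          _ = ε * x := by field_simp
      nlinarith [hsplit, hsum_rest, hsum]
    have hak0 : (1 - ε) * x < a k0 * s k0 := hrest a (fun k => le_max_left _ _) hA
    have hbk0 : (1 - ε) * x < b k0 * s k0 := hrest b (fun k => le_max_right _ _) hB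
    rcases min_choice (a k0) (b k0) with h | h <;> rw [h] <;> assumption

lemma aux_scaled1 {Ω : Type*} [MeasurableSpace Ω] (P : Measure Ω) [IsProbabilityMeasure P]
    (S : Ω → ℝ) (C α : ℝ) (hC : 0 < C) (hα0 : 0 < α)
    (htail : Tendsto (fun x : ℝ => (P {ω | x < S ω}).toReal / (2 * C * x ^ (-α))) atTop (nhds 1))
    (c : ℝ) (hc : 0 ≤ c) :
    Tendsto (fun x : ℝ => (P {ω | x < c * S ω}).toReal / (2 * C * x ^ (-α)))
      atTop (nhds (c ^ α)) := by
  have := aux_scaled P S C α hC hα0 htail c 1 hc one_pos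
  simpa using this

lemma aux_cross1 {Ω : Type*} [MeasurableSpace Ω] (P : Measure Ω) [IsProbabilityMeasure P]
    (Sk Sl : Ω → ℝ) (hkl : IndepFun Sk Sl P) (C α : ℝ) (hC : 0 < C) (hα0 : 0 < α)
    (htailk : Tendsto (fun x : ℝ => (P {ω | x < Sk ω}).toReal / (2 * C * x ^ (-α))) atTop (nhds 1))
    (htaill : Tendsto (fun x : ℝ => (P {ω | x < Sl ω}).toReal / (2 * C * x ^ (-α))) atTop (nhds 1))
    (c d : ℝ) (hc : 0 ≤ c) (hd : 0 ≤ d) :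
    Tendsto (fun x : ℝ => (P ({ω | x < c * Sk ω} ∩ {ω | x < d * Sl ω})).toReal /
      (2 * C * x ^ (-α))) atTop (nhds 0) := by
  have := aux_cross P Sk Sl hkl C α hC hα0 htailk htaill c d 1 1 hc hd one_pos one_pos
  simpa using this

lemma key {Ω : Type*} [MeasurableSpace Ω] (P : Measure Ω)
    [IsProbabilityMeasure P] {K : ℕ} (S : Fin K → Ω → ℝ)
    (hmeas : ∀ k, Measurable (S k))
    (hind : iIndepFun S P)
    (hnn : ∀ k ω, 0 ≤ S k ω)
    (C α : ℝ) (hC : 0 < C) (hα0 : 0 < α)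
    (htail : ∀ k, Tendsto (fun x : ℝ => (P {ω | x < S k ω}).toReal /
      (2 * C * x ^ (-α))) atTop (nhds 1))
    (a b : Fin K → ℝ) (ha : ∀ k, 0 ≤ a k) (hb : ∀ k, 0 ≤ b k) :
    Tendsto (fun x : ℝ =>
        (P {ω | x < ∑ k, a k * S k ω ∧ x < ∑ k, b k * S k ω}).toReal / (2 * C * x ^ (-α)))
      atTop (nhds (∑ k, (min (a k) (b k)) ^ α)) := by
  classical
  set M := ∑ k, (min (a k) (b k)) ^ α with hMdef
  set N : ℝ → ℝ := fun x => 2 * C * x ^ (-α) with hNdef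
  set E : ℝ → Set Ω := fun x => {ω | x < ∑ k, a k * S k ω ∧ x < ∑ k, b k * S k ω} with hEdef
  have hm : ∀ k, 0 ≤ min (a k) (b k) := fun k => le_min (ha k) (hb k)
  have hmaxnn : ∀ k, 0 ≤ max (a k) (b k) := fun k => le_trans (ha k) (le_max_left _ _)
  have hmA : ∀ (cc : ℝ) (k : Fin K) (y : ℝ), MeasurableSet {ω | y < cc * S k ω} := fun cc k y =>
    measurableSet_lt measurable_const ((hmeas k).const_mul cc)
  have hNpos : ∀ x : ℝ, 0 < x → 0 < N x := fun x hx => by positivity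
  -- single-term containment in sums
  have hsingle : ∀ (c : Fin K → ℝ), (∀ k, 0 ≤ c k) → ∀ (k : Fin K) (ω : Ω),
      c k * S k ω ≤ ∑ l, c l * S l ω := by
    intro c hc k ω
    exact Finset.single_le_sum (fun l _ => mul_nonneg (hc l) (hnn l ω)) (Finset.mem_univ k)
  ---- LOWER BOUND ----
  have hlow_ineq : ∀ x : ℝ,
      (∑ k, (P {ω | x < min (a k) (b k) * S k ω}).toReal) -
        (∑ k, ∑ l, if k = l then 0 else
          (P ({ω | x < min (a k) (b k) * S k ω} ∩
              {ω | x < min (a l) (b l) * S l ω})).toReal) ≤ (P (E x)).toReal := by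
    intro x
    have hbon := bonferroni P (fun k => {ω | x < min (a k) (b k) * S k ω})
      (fun k => hmA _ k x) Finset.univ
    have hsub : (⋃ k ∈ Finset.univ, {ω | x < min (a k) (b k) * S k ω}) ⊆ E x := by
      intro ω hω
      simp only [Set.mem_iUnion, Set.mem_setOf_eq] at hω
      obtain ⟨k, _, hk⟩ := hω
      constructor
      · calc x < min (a k) (b k) * S k ω := hk
          _ ≤ a k * S k ω := mul_le_mul_of_nonneg_right (min_le_left _ _) (hnn k ω)
          _ ≤ ∑ l, a l * S l ω := hsingle a ha k ω
      · calc x < min (a k) (b k) * S k ω := hk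
          _ ≤ b k * S k ω := mul_le_mul_of_nonneg_right (min_le_right _ _) (hnn k ω)
          _ ≤ ∑ l, b l * S l ω := hsingle b hb k ω
    have hENN : ∑ k, P {ω | x < min (a k) (b k) * S k ω} ≤ P (E x) +
        ∑ k, ∑ l, (if k = l then 0 else
          P ({ω | x < min (a k) (b k) * S k ω} ∩ {ω | x < min (a l) (b l) * S l ω})) :=
      le_trans hbon (add_le_add_left (measure_mono hsub) _)
    have hfin1 : (∑ k, P {ω | x < min (a k) (b k) * S k ω}) ≠ ⊤ :=
      ENNReal.sum_ne_top.mpr fun k _ => measure_ne_top P _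
    have hfin2 : (P (E x) + ∑ k, ∑ l, (if k = l then 0 else
        P ({ω | x < min (a k) (b k) * S k ω} ∩ {ω | x < min (a l) (b l) * S l ω}))) ≠ ⊤ := by
      apply ENNReal.add_ne_top.mpr
      refine ⟨measure_ne_top P _, ENNReal.sum_ne_top.mpr fun k _ =>
        ENNReal.sum_ne_top.mpr fun l _ => ?_⟩
      split <;> simp [measure_ne_top]
    have := (ENNReal.toReal_le_toReal hfin1 hfin2).mpr hENN
    rw [ENNReal.toReal_sum (fun k _ => measure_ne_top P _),
      ENNReal.toReal_add (measure_ne_top P _) (ENNReal.sum_ne_top.mpr fun k _ =>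
        ENNReal.sum_ne_top.mpr fun l _ => by split <;> simp [measure_ne_top])] at this
    rw [sub_le_iff_le_add]
    refine le_trans this ?_
    apply add_le_add_right
    apply le_of_eq
    rw [ENNReal.toReal_sum (fun k _ => ENNReal.sum_ne_top.mpr fun l _ =>
      by split <;> simp [measure_ne_top])]
    refine Finset.sum_congr rfl fun k _ => ?_
    rw [ENNReal.toReal_sum (fun l _ => by split <;> simp [measure_ne_top])]
    refine Finset.sum_congr rfl fun l _ => ?_
    split <;> simp
  have hlow_tend : Tendsto (fun x : ℝ =>
      (∑ k, (P {ω | x < min (a k) (b k) * S k ω}).toReal / N x) -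
        (∑ k, ∑ l, (if k = l then 0 else
          (P ({ω | x < min (a k) (b k) * S k ω} ∩
              {ω | x < min (a l) (b l) * S l ω})).toReal) / N x)) atTop (nhds M) := by
    have h1 : Tendsto (fun x : ℝ =>
        ∑ k, (P {ω | x < min (a k) (b k) * S k ω}).toReal / N x) atTop (nhds M) := by
      rw [hMdef]
      exact tendsto_finset_sum _ fun k _ =>
        aux_scaled1 P (S k) C α hC hα0 (htail k) _ (hm k)
    have h2 : Tendsto (fun x : ℝ =>
        ∑ k, ∑ l, (if k = l then 0 else
          (P ({ω | x < min (a k) (b k) * S k ω} ∩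
              {ω | x < min (a l) (b l) * S l ω})).toReal) / N x) atTop (nhds 0) := by
      have : Tendsto (fun x : ℝ => ∑ k, ∑ l, ((if k = l then (0:ℝ) else
          (P ({ω | x < min (a k) (b k) * S k ω} ∩
              {ω | x < min (a l) (b l) * S l ω})).toReal) / N x)) atTop
          (nhds (∑ k : Fin K, ∑ l : Fin K, (0:ℝ))) := by
        refine tendsto_finset_sum _ fun k _ => tendsto_finset_sum _ fun l _ => ?_
        by_cases hkl : k = l
        · simpa [hkl] using (tendsto_const_nhds : Tendsto (fun _ : ℝ => (0:ℝ)) atTop (nhds 0))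
        · simp only [if_neg hkl]
          exact aux_cross1 P (S k) (S l) (hind.indepFun hkl) C α hC hα0
            (htail k) (htail l) _ _ (hm k) (hm l)
      simpa using this
    have := h1.sub h2
    rw [sub_zero] at this
    exact this
  ---- UPPER BOUND ----
  have hup : ∀ ε : ℝ, 0 < ε → ε < 1 →
      (∀ᶠ x in atTop, (P (E x)).toReal / N x ≤
        (∑ k, (P {ω | (1 - ε) * x < min (a k) (b k) * S k ω}).toReal / N x) +
        ∑ k, ∑ l, (P (if k = l then (∅ : Set Ω) else
          ({ω | (ε / K) * x < max (a k) (b k) * S k ω} ∩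
           {ω | (ε / K) * x < max (a l) (b l) * S l ω}))).toReal / N x) ∧
      Tendsto (fun x : ℝ =>
        (∑ k, (P {ω | (1 - ε) * x < min (a k) (b k) * S k ω}).toReal / N x) +
        ∑ k, ∑ l, (P (if k = l then (∅ : Set Ω) else
          ({ω | (ε / K) * x < max (a k) (b k) * S k ω} ∩
           {ω | (ε / K) * x < max (a l) (b l) * S l ω}))).toReal / N x) atTop
        (nhds (M * (1 - ε) ^ (-α))) := by
    intro ε hε0 hε1
    constructor
    · filter_upwards [eventually_gt_atTop 0] with x hx
      have hN := hNpos x hx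
      have hincl : E x ⊆ (⋃ k ∈ Finset.univ, {ω | (1 - ε) * x < min (a k) (b k) * S k ω}) ∪
          (⋃ k ∈ Finset.univ, ⋃ l ∈ Finset.univ, (if k = l then (∅ : Set Ω) else
            ({ω | (ε / K) * x < max (a k) (b k) * S k ω} ∩
             {ω | (ε / K) * x < max (a l) (b l) * S l ω}))) := by
        intro ω hω
        obtain ⟨h1, h2⟩ := hω
        rcases det_incl a b (fun k => S k ω) ha hb (fun k => hnn k ω) x ε hx hε0 hε1 h1 h2 with
          ⟨k, hk⟩ | ⟨k, l, hkl, hk, hl⟩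
        · left
          exact Set.mem_biUnion (Finset.mem_univ k) hk
        · right
          refine Set.mem_biUnion (Finset.mem_univ k) ?_
          refine Set.mem_biUnion (Finset.mem_univ l) ?_
          rw [if_neg hkl]
          exact ⟨hk, hl⟩
      have hENN : P (E x) ≤ (∑ k, P {ω | (1 - ε) * x < min (a k) (b k) * S k ω}) +
          ∑ k, ∑ l, P (if k = l then (∅ : Set Ω) else
            ({ω | (ε / K) * x < max (a k) (b k) * S k ω} ∩
             {ω | (ε / K) * x < max (a l) (b l) * S l ω})) := by
        refine le_trans (measure_mono hincl) (le_trans (measure_union_le _ _) ?_)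
        apply add_le_add
        · exact measure_biUnion_finset_le _ _
        · refine le_trans (measure_biUnion_finset_le _ _) (Finset.sum_le_sum fun k _ => ?_)
          exact measure_biUnion_finset_le _ _
      have hfinR : ((∑ k, P {ω | (1 - ε) * x < min (a k) (b k) * S k ω}) +
          ∑ k, ∑ l, P (if k = l then (∅ : Set Ω) else
            ({ω | (ε / K) * x < max (a k) (b k) * S k ω} ∩
             {ω | (ε / K) * x < max (a l) (b l) * S l ω}))) ≠ ⊤ :=
        ENNReal.add_ne_top.mpr ⟨ENNReal.sum_ne_top.mpr fun k _ => measure_ne_top P _,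
          ENNReal.sum_ne_top.mpr fun k _ => ENNReal.sum_ne_top.mpr fun l _ => measure_ne_top P _⟩
      have hR := (ENNReal.toReal_le_toReal (measure_ne_top P _) hfinR).mpr hENN
      rw [ENNReal.toReal_add (ENNReal.sum_ne_top.mpr fun k _ => measure_ne_top P _)
          (ENNReal.sum_ne_top.mpr fun k _ => ENNReal.sum_ne_top.mpr fun l _ => measure_ne_top P _),
        ENNReal.toReal_sum (fun k _ => measure_ne_top P _),
        ENNReal.toReal_sum (fun k _ => ENNReal.sum_ne_top.mpr fun l _ => measure_ne_top P _)] at hR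
      have hR2 : (P (E x)).toReal ≤ (∑ k, (P {ω | (1 - ε) * x < min (a k) (b k) * S k ω}).toReal) +
          ∑ k, ∑ l, (P (if k = l then (∅ : Set Ω) else
            ({ω | (ε / K) * x < max (a k) (b k) * S k ω} ∩
             {ω | (ε / K) * x < max (a l) (b l) * S l ω}))).toReal := by
        refine le_trans hR (le_of_eq ?_)
        congr 1
        exact Finset.sum_congr rfl fun k _ =>
          ENNReal.toReal_sum (fun l _ => measure_ne_top P _)
      rw [← Finset.sum_div]
      have hsum2 : ∑ k, ∑ l, (P (if k = l then (∅ : Set Ω) else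
            ({ω | (ε / K) * x < max (a k) (b k) * S k ω} ∩
             {ω | (ε / K) * x < max (a l) (b l) * S l ω}))).toReal / N x =
          (∑ k, ∑ l, (P (if k = l then (∅ : Set Ω) else
            ({ω | (ε / K) * x < max (a k) (b k) * S k ω} ∩
             {ω | (ε / K) * x < max (a l) (b l) * S l ω}))).toReal) / N x := by
        rw [Finset.sum_div]
        exact Finset.sum_congr rfl fun k _ => (Finset.sum_div _ _ _).symm
      rw [hsum2, ← add_div]
      exact (div_le_div_iff_of_pos_right hN).mpr hR2
    · have h1 : Tendsto (fun x : ℝ =>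
          ∑ k, (P {ω | (1 - ε) * x < min (a k) (b k) * S k ω}).toReal / N x) atTop
          (nhds (M * (1 - ε) ^ (-α))) := by
        have := tendsto_finset_sum (Finset.univ : Finset (Fin K)) fun k _ =>
          aux_scaled P (S k) C α hC hα0 (htail k) (min (a k) (b k)) (1 - ε) (hm k)
            (by linarith)
        rw [← Finset.sum_mul] at this
        exact this
      have h2 : Tendsto (fun x : ℝ =>
          ∑ k, ∑ l, (P (if k = l then (∅ : Set Ω) else
            ({ω | (ε / K) * x < max (a k) (b k) * S k ω} ∩
             {ω | (ε / K) * x < max (a l) (b l) * S l ω}))).toReal / N x) atTop (nhds 0) := by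
        have h0 : Tendsto (fun x : ℝ =>
            ∑ k, ∑ l, (P (if k = l then (∅ : Set Ω) else
              ({ω | (ε / K) * x < max (a k) (b k) * S k ω} ∩
               {ω | (ε / K) * x < max (a l) (b l) * S l ω}))).toReal / N x) atTop
            (nhds (∑ _k : Fin K, ∑ _l : Fin K, (0:ℝ))) := by
          refine tendsto_finset_sum _ fun k _ => tendsto_finset_sum _ fun l _ => ?_
          by_cases hkl : k = l
          · refine (tendsto_const_nhds : Tendsto (fun _ : ℝ => (0:ℝ)) atTop (nhds 0)).congr
              fun x => ?_
            rw [if_pos hkl]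
            simp
          · have hKpos : (0:ℝ) < (K:ℝ) := by exact_mod_cast k.pos
            have := aux_cross P (S k) (S l) (hind.indepFun hkl) C α hC hα0
              (htail k) (htail l) (max (a k) (b k)) (max (a l) (b l)) (ε / K) (ε / K)
              (hmaxnn k) (hmaxnn l) (by positivity) (by positivity)
            refine this.congr fun x => ?_
            rw [if_neg hkl]
        simpa using h0
      have := h1.add h2
      rw [add_zero] at this
      exact this
  ---- CONCLUSION ----
  refine tendsto_order.2 ⟨?_, ?_⟩
  · intro v hv
    have hlow_ev : ∀ᶠ x in atTop,
        (∑ k, (P {ω | x < min (a k) (b k) * S k ω}).toReal / N x) -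
          (∑ k, ∑ l, (if k = l then 0 else
            (P ({ω | x < min (a k) (b k) * S k ω} ∩
                {ω | x < min (a l) (b l) * S l ω})).toReal) / N x) ≤ (P (E x)).toReal / N x := by
      filter_upwards [eventually_gt_atTop 0] with x hx
      have hN := hNpos x hx
      rw [← Finset.sum_div]
      have hsum2 : ∑ k, ∑ l, (if k = l then 0 else
            (P ({ω | x < min (a k) (b k) * S k ω} ∩
                {ω | x < min (a l) (b l) * S l ω})).toReal) / N x =
          (∑ k, ∑ l, (if k = l then 0 else
            (P ({ω | x < min (a k) (b k) * S k ω} ∩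
                {ω | x < min (a l) (b l) * S l ω})).toReal)) / N x := by
        rw [Finset.sum_div]
        exact Finset.sum_congr rfl fun k _ => (Finset.sum_div _ _ _).symm
      rw [hsum2, div_sub_div_same]
      exact (div_le_div_iff_of_pos_right hN).mpr (hlow_ineq x)
    filter_upwards [hlow_tend.eventually (eventually_gt_nhds hv), hlow_ev] with x h1 h2
    exact lt_of_lt_of_le h1 h2
  · intro v hv
    have hcont : Tendsto (fun ε : ℝ => M * (1 - ε) ^ (-α)) (nhdsWithin 0 (Set.Ioi 0))
        (nhds M) := by
      have c1 : ContinuousAt (fun ε : ℝ => (1 - ε)) 0 :=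
        (continuous_const.sub continuous_id).continuousAt
      have c2 : ContinuousAt (fun ε : ℝ => (1 - ε) ^ (-α)) 0 :=
        c1.rpow_const (Or.inl (by norm_num))
      have c3 : ContinuousAt (fun ε : ℝ => M * (1 - ε) ^ (-α)) 0 := continuousAt_const.mul c2
      have := c3.tendsto.mono_left
        (nhdsWithin_le_nhds : nhdsWithin (0:ℝ) (Set.Ioi 0) ≤ nhds 0)
      simpa using this
    have hev1 : ∀ᶠ ε in nhdsWithin (0:ℝ) (Set.Ioi 0), M * (1 - ε) ^ (-α) < v :=
      hcont.eventually (eventually_lt_nhds hv)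
    have hev2 : ∀ᶠ ε in nhdsWithin (0:ℝ) (Set.Ioi 0), ε < 1 :=
      ((eventually_lt_nhds (by norm_num : (0:ℝ) < 1)).filter_mono nhdsWithin_le_nhds)
    have hev3 : ∀ᶠ ε in nhdsWithin (0:ℝ) (Set.Ioi 0), 0 < ε :=
      eventually_mem_nhdsWithin
    obtain ⟨ε, hεv, hε1, hε0⟩ := (hev1.and (hev2.and hev3)).exists
    obtain ⟨hle, htend⟩ := hup ε hε0 hε1
    filter_upwards [htend.eventually (eventually_lt_nhds hεv), hle] with x h1 h2
    exact lt_of_le_of_lt h2 h1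

/-- Tail dependence coefficient for two nonnegative linear combinations of i.i.d.
regularly varying factors: if Σ min(aki,akj)^α > 0 then
χ = lim P(Rj > x | Ri > x) = (Σ min(aki,akj)^α)/(Σ aki^α) > 0. -/
theorem chi_linear_combinations {Ω : Type*} [MeasurableSpace Ω] (P : Measure Ω)
    [IsProbabilityMeasure P] {K : ℕ} (S : Fin K → Ω → ℝ)
    (hmeas : ∀ k, Measurable (S k))
    (hind : iIndepFun S P)
    (hident : ∀ k k' : Fin K, IdentDistrib (S k) (S k') P P)
    (hnn : ∀ k ω, 0 ≤ S k ω)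
    (C α : ℝ) (hC : 0 < C) (hα0 : 0 < α) (hα1 : α < 1)
    (htail : ∀ k, Tendsto (fun x : ℝ => (P {ω | x < S k ω}).toReal /
      (2 * C * x ^ (-α))) atTop (nhds 1))
    (ai aj : Fin K → ℝ) (hai : ∀ k, 0 ≤ ai k) (haj : ∀ k, 0 ≤ aj k)
    (hpos : 0 < ∑ k, (min (ai k) (aj k)) ^ α)
    (hden : 0 < ∑ k, ai k ^ α) :
    Tendsto (fun x : ℝ =>
        (P {ω | x < ∑ k, ai k * S k ω ∧ x < ∑ k, aj k * S k ω}).toReal /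
          (P {ω | x < ∑ k, ai k * S k ω}).toReal) atTop
      (nhds ((∑ k, (min (ai k) (aj k)) ^ α) / (∑ k, ai k ^ α))) ∧
    0 < (∑ k, (min (ai k) (aj k)) ^ α) / (∑ k, ai k ^ α) := by
  refine ⟨?_, div_pos hpos hden⟩
  have hnum := key P S hmeas hind hnn C α hC hα0 htail ai aj hai haj
  have hden' := key P S hmeas hind hnn C α hC hα0 htail ai ai hai hai
  simp only [min_self] at hden'
  have hden'' : Tendsto (fun x : ℝ =>
      (P {ω | x < ∑ k, ai k * S k ω}).toReal / (2 * C * x ^ (-α))) atTop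
      (nhds (∑ k, ai k ^ α)) := by
    refine hden'.congr fun x => ?_
    have hset : {ω | x < ∑ k, ai k * S k ω ∧ x < ∑ k, ai k * S k ω} =
        {ω | x < ∑ k, ai k * S k ω} := by
      ext ω; simp [and_self]
    rw [hset]
  have hratio := hnum.div hden'' (ne_of_gt hden)
  refine hratio.congr' ?_
  filter_upwards [eventually_gt_atTop 0] with x hx
  have hN : (2 * C * x ^ (-α)) ≠ 0 := by positivity
  simp only [Pi.div_apply]
  set A := (P {ω | x < ∑ k, ai k * S k ω ∧ x < ∑ k, aj k * S k ω}).toReal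
  set B := (P {ω | x < ∑ k, ai k * S k ω}).toReal
  rcases eq_or_ne B 0 with hB | hB
  · rw [hB, zero_div, div_zero, div_zero]
  · field_simp
end

section
/- Let R and W be independent with P(R > x) ~ c_R x^{-1} and P(W > x) = x^{-1} (x ≥ 1), both regularly varying with index -1. Then P(RW > x) ~ c_R x^{-1} log x as x → ∞. -/
open MeasureTheory Filter ProbabilityTheory Set

lemma key_asymp (G : ℝ → ℝ) (hG : Antitone G) (hG0 : ∀ s, 0 ≤ G s) (hG1 : ∀ s, G s ≤ 1)
    (c : ℝ) (hc : 0 < c) (hlim : Tendsto (fun s => G s * s) atTop (nhds c)) :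
    Tendsto (fun x => (∫ s in (0:ℝ)..x, G s) / (c * Real.log x)) atTop (nhds 1) := by
  rw [Metric.tendsto_nhds]
  intro ε hε
  have hM : ∀ᶠ s in atTop, |G s * s - c| < c * (ε/4) := by
    have := hlim
    rw [Metric.tendsto_nhds] at this
    exact this _ (by positivity)
  obtain ⟨M, hM1, hMprop⟩ : ∃ M : ℝ, 1 ≤ M ∧ ∀ s, M ≤ s → |G s * s - c| < c * (ε/4) := by
    obtain ⟨M0, hM0⟩ := hM.exists_forall_of_atTop
    exact ⟨max M0 1, le_max_right _ _, fun s hs => hM0 s (le_trans (le_max_left _ _) hs)⟩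
  have hMpos : 0 < M := lt_of_lt_of_le one_pos hM1
  have hub : ∀ s, M ≤ s → G s ≤ c * (1 + ε/4) / s := by
    intro s hs
    have hspos : 0 < s := lt_of_lt_of_le hMpos hs
    have := (abs_lt.1 (hMprop s hs)).2
    rw [div_eq_mul_inv, ← mul_le_mul_iff_of_pos_right hspos, mul_assoc, inv_mul_cancel₀ hspos.ne', mul_one]
    nlinarith
  have hlb : ∀ s, M ≤ s → c * (1 - ε/4) / s ≤ G s := by
    intro s hs
    have hspos : 0 < s := lt_of_lt_of_le hMpos hs
    have := (abs_lt.1 (hMprop s hs)).1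
    rw [div_eq_mul_inv, ← mul_le_mul_iff_of_pos_right hspos, mul_assoc, inv_mul_cancel₀ hspos.ne', mul_one]
    nlinarith
  have hint : ∀ a b : ℝ, IntervalIntegrable G volume a b := fun a b => hG.intervalIntegrable
  have hinv : ∀ x : ℝ, M ≤ x → IntervalIntegrable (fun s : ℝ => s⁻¹) volume M x := by
    intro x hx
    apply ContinuousOn.intervalIntegrable
    apply ContinuousOn.inv₀ continuousOn_id
    intro t ht
    rw [uIcc_of_le hx] at ht
    exact (lt_of_lt_of_le hMpos ht.1).ne'
  have hIub : ∀ x : ℝ, M ≤ x →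
      (∫ s in (0:ℝ)..x, G s) ≤ M + c * (1 + ε/4) * (Real.log x - Real.log M) := by
    intro x hx
    have hxpos : 0 < x := lt_of_lt_of_le hMpos hx
    rw [← intervalIntegral.integral_add_adjacent_intervals (hint 0 M) (hint M x)]
    have h1 : (∫ s in (0:ℝ)..M, G s) ≤ M := by
      have := intervalIntegral.integral_mono_on (f := G) (g := fun _ => (1:ℝ)) hMpos.le
        (hint 0 M) intervalIntegrable_const (fun s _ => hG1 s)
      simpa using this
    have h2 : (∫ s in M..x, G s) ≤ c * (1 + ε/4) * (Real.log x - Real.log M) := by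
      have hcmp := intervalIntegral.integral_mono_on (f := G)
        (g := fun s => c * (1 + ε/4) * s⁻¹) hx (hint M x) ((hinv x hx).const_mul _)
        (fun s hs => hub s hs.1)
      have heq : (∫ s in M..x, c * (1 + ε/4) * s⁻¹)
          = c * (1 + ε/4) * (Real.log x - Real.log M) := by
        rw [intervalIntegral.integral_const_mul, integral_inv_of_pos hMpos hxpos,
          Real.log_div hxpos.ne' hMpos.ne']
      linarith
    linarith
  have hIlb : ∀ x : ℝ, M ≤ x →
      c * (1 - ε/4) * (Real.log x - Real.log M) ≤ (∫ s in (0:ℝ)..x, G s) := by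
    intro x hx
    have hxpos : 0 < x := lt_of_lt_of_le hMpos hx
    rw [← intervalIntegral.integral_add_adjacent_intervals (hint 0 M) (hint M x)]
    have h1 : (0:ℝ) ≤ ∫ s in (0:ℝ)..M, G s :=
      intervalIntegral.integral_nonneg hMpos.le (fun s _ => hG0 s)
    have h2 : c * (1 - ε/4) * (Real.log x - Real.log M) ≤ ∫ s in M..x, G s := by
      have hcmp := intervalIntegral.integral_mono_on (f := fun s => c * (1 - ε/4) * s⁻¹)
        (g := G) hx ((hinv x hx).const_mul _) (hint M x) (fun s hs => hlb s hs.1)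
      have heq : (∫ s in M..x, c * (1 - ε/4) * s⁻¹)
          = c * (1 - ε/4) * (Real.log x - Real.log M) := by
        rw [intervalIntegral.integral_const_mul, integral_inv_of_pos hMpos hxpos,
          Real.log_div hxpos.ne' hMpos.ne']
      linarith
    linarith
  -- limit functions
  set u : ℝ → ℝ := fun x => M * (c * Real.log x)⁻¹ + (1 + ε/4) * (1 - Real.log M * (Real.log x)⁻¹)
    with hu_def
  set l : ℝ → ℝ := fun x => (1 - ε/4) * (1 - Real.log M * (Real.log x)⁻¹) with hl_def
  have hlogtop : Tendsto Real.log atTop atTop := Real.tendsto_log_atTop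
  have hinv0 : Tendsto (fun x : ℝ => (Real.log x)⁻¹) atTop (nhds 0) :=
    tendsto_inv_atTop_zero.comp hlogtop
  have hcinv0 : Tendsto (fun x : ℝ => (c * Real.log x)⁻¹) atTop (nhds 0) :=
    tendsto_inv_atTop_zero.comp (hlogtop.const_mul_atTop hc)
  have hu_lim : Tendsto u atTop (nhds (1 + ε/4)) := by
    have : Tendsto u atTop (nhds (M * 0 + (1 + ε/4) * (1 - Real.log M * 0))) :=
      ((hcinv0.const_mul M)).add ((tendsto_const_nhds.sub (hinv0.const_mul (Real.log M))).const_mul _)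
    simpa using this
  have hl_lim : Tendsto l atTop (nhds (1 - ε/4)) := by
    have : Tendsto l atTop (nhds ((1 - ε/4) * (1 - Real.log M * 0))) :=
      (tendsto_const_nhds.sub (hinv0.const_mul (Real.log M))).const_mul _
    simpa using this
  have hu_ev : ∀ᶠ x in atTop, u x < 1 + ε := hu_lim.eventually_lt_const (by linarith)
  have hl_ev : ∀ᶠ x in atTop, 1 - ε < l x := hl_lim.eventually_const_lt (by linarith)
  filter_upwards [hu_ev, hl_ev, eventually_ge_atTop M, eventually_ge_atTop (Real.exp 1)]
    with x hux hlx hMx hex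
  have hxpos : 0 < x := lt_of_lt_of_le (Real.exp_pos 1) hex
  have hlogpos : 0 < Real.log x := by
    have : (1:ℝ) ≤ Real.log x := by
      rw [← Real.log_exp 1]; exact Real.log_le_log (Real.exp_pos 1) hex
    linarith
  have hden : 0 < c * Real.log x := by positivity
  have hfu : (∫ s in (0:ℝ)..x, G s) / (c * Real.log x) ≤ u x := by
    rw [div_le_iff₀ hden]
    have : u x * (c * Real.log x) = M + c * (1 + ε/4) * (Real.log x - Real.log M) := by
      simp only [hu_def]
      field_simp
    rw [this]
    exact hIub x hMx
  have hfl : l x ≤ (∫ s in (0:ℝ)..x, G s) / (c * Real.log x) := by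
    rw [le_div_iff₀ hden]
    have : l x * (c * Real.log x) = c * (1 - ε/4) * (Real.log x - Real.log M) := by
      simp only [hl_def]
      field_simp
    rw [this]
    exact hIlb x hMx
  have h1 := lt_of_le_of_lt hfu hux
  have h2 := lt_of_lt_of_le hlx hfl
  rw [Real.dist_eq, abs_sub_lt_iff]
  constructor <;> linarith

/-- Boundary case: product of two independent Pareto(1)-type variables has tail
of order x⁻¹ log x: if P(R > x) ~ c_R x⁻¹ and P(W > x) = x⁻¹ (x ≥ 1), then
P(R W > x) ~ c_R x⁻¹ log x. -/
theorem pareto_product_boundary_tail {Ω : Type*} [MeasurableSpace Ω]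
    (P : Measure Ω) [IsProbabilityMeasure P] (R W : Ω → ℝ)
    (hRmeas : Measurable R) (hWmeas : Measurable W)
    (hRnn : ∀ ω, 0 ≤ R ω) (hW1 : ∀ ω, 1 ≤ W ω)
    (hind : IndepFun R W P)
    (cR : ℝ) (hcR : 0 < cR)
    (hRtail : Tendsto (fun x : ℝ => (P {ω | x < R ω}).toReal / (cR * x⁻¹))
      atTop (nhds 1))
    (hWtail : ∀ w : ℝ, 1 ≤ w → P {ω | w < W ω} = ENNReal.ofReal w⁻¹) :
    Tendsto (fun x : ℝ => (P {ω | x < R ω * W ω}).toReal /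
      (cR * x⁻¹ * Real.log x)) atTop (nhds 1) := by
  set G : ℝ → ℝ := fun s => (P {ω | s < R ω}).toReal with hGdef
  have hGanti : Antitone G := fun s s' h =>
    ENNReal.toReal_mono (measure_ne_top P _)
      (measure_mono fun ω hω => lt_of_le_of_lt h hω)
  have hG0 : ∀ s, 0 ≤ G s := fun s => ENNReal.toReal_nonneg
  have hG1 : ∀ s, G s ≤ 1 := fun s => by
    have h := prob_le_one (μ := P) (s := {ω | s < R ω})
    calc G s ≤ (1 : ENNReal).toReal := ENNReal.toReal_mono (by norm_num) h
    _ = 1 := by simp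
  have hGmeas : Measurable G := hGanti.measurable
  have hWprob : IsProbabilityMeasure (P.map W) :=
    Measure.isProbabilityMeasure_map hWmeas.aemeasurable
  -- main identity
  have key_id : ∀ x : ℝ, 1 ≤ x →
      (P {ω | x < R ω * W ω}).toReal = x⁻¹ * ∫ s in (0:ℝ)..x, G s := by
    intro x hx
    have hxpos : 0 < x := lt_of_lt_of_le one_pos hx
    have hmap := (indepFun_iff_map_prod_eq_prod_map_map
      hRmeas.aemeasurable hWmeas.aemeasurable).1 hind
    have hS : MeasurableSet {p : ℝ × ℝ | x < p.1 * p.2} :=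
      measurableSet_lt measurable_const (measurable_fst.mul measurable_snd)
    have h1 : P {ω | x < R ω * W ω}
        = ((P.map R).prod (P.map W)) {p : ℝ × ℝ | x < p.1 * p.2} := by
      rw [← hmap, Measure.map_apply (hRmeas.prodMk hWmeas) hS]
      rfl
    have h2 : ((P.map R).prod (P.map W)) {p : ℝ × ℝ | x < p.1 * p.2}
        = ∫⁻ r, (P.map W) {w | x < r * w} ∂(P.map R) := by
      rw [Measure.prod_apply hS]
      rfl
    have hae : ∀ᵐ r ∂(P.map R), r ∈ Ici (0:ℝ) :=
      (ae_map_iff hRmeas.aemeasurable measurableSet_Ici).2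
        (ae_of_all _ fun ω => hRnn ω)
    have hWset : ∀ a : ℝ, (P.map W) {w | a < w} = P {ω | a < W ω} := fun a => by
      rw [show {w : ℝ | a < w} = Ioi a from rfl, Measure.map_apply hWmeas measurableSet_Ioi]
      rfl
    have h3 : ∫⁻ r, (P.map W) {w | x < r * w} ∂(P.map R)
        = ∫⁻ r, ENNReal.ofReal (min 1 (r / x)) ∂(P.map R) := by
      apply lintegral_congr_ae
      filter_upwards [hae] with r hr
      rcases eq_or_lt_of_le (mem_Ici.1 hr) with h0 | hrpos
      · have hempty : {w : ℝ | x < r * w} = (∅ : Set ℝ) := by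
          ext w
          simp only [mem_setOf_eq, mem_empty_iff_false, iff_false, not_lt, ← h0, zero_mul]
          linarith
        rw [hempty, ← h0]
        simp
      · by_cases hrx : r ≤ x
        · have hxr1 : 1 ≤ x / r := (one_le_div hrpos).2 hrx
          have hset : {w : ℝ | x < r * w} = {w : ℝ | x / r < w} := by
            ext w
            rw [mem_setOf_eq, mem_setOf_eq, div_lt_iff₀ hrpos, mul_comm]
          rw [hset, hWset, hWtail _ hxr1, inv_div]
          congr 1
          rw [min_eq_right ((div_le_one hxpos).2 hrx)]
        · push_neg at hrx
          have hone : (1:ℝ) ≤ r / x := le_of_lt ((one_lt_div hxpos).2 hrx)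
          have hle : (P.map W) {w | x < r * w} ≤ 1 := prob_le_one
          have hge : (1:ENNReal) ≤ (P.map W) {w | x < r * w} := by
            have hsub : {w : ℝ | 1 < w} ⊆ {w : ℝ | x < r * w} := by
              intro w hw
              have hw1 : (1:ℝ) < w := hw
              have : r * 1 ≤ r * w := by nlinarith
              simp only [mem_setOf_eq]
              nlinarith
            calc (1:ENNReal) = P {ω | (1:ℝ) < W ω} := by rw [hWtail 1 le_rfl]; simp
            _ = (P.map W) {w : ℝ | 1 < w} := (hWset 1).symm
            _ ≤ _ := measure_mono hsub
          rw [le_antisymm hle hge, min_eq_left hone]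
          simp
    have h4 : ∫⁻ r, ENNReal.ofReal (min 1 (r / x)) ∂(P.map R)
        = ∫⁻ ω, ENNReal.ofReal (min 1 (R ω / x)) ∂P :=
      lintegral_map ((measurable_const.min (measurable_id.div_const x)).ennreal_ofReal)
        hRmeas
    have h5 : ∫⁻ ω, ENNReal.ofReal (min 1 (R ω / x)) ∂P
        = ∫⁻ t in Ioi (0:ℝ), P {ω | t < min 1 (R ω / x)} :=
      lintegral_eq_lintegral_meas_lt P
        (ae_of_all _ fun ω => le_min zero_le_one (div_nonneg (hRnn ω) hxpos.le))
        ((measurable_const.min (hRmeas.div_const x)).aemeasurable)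
    have h6 : ∫⁻ t in Ioi (0:ℝ), P {ω | t < min 1 (R ω / x)}
        = ∫⁻ t in Ioo (0:ℝ) 1, P {ω | t * x < R ω} := by
      have hind : ∀ t ∈ Ioi (0:ℝ), P {ω | t < min 1 (R ω / x)}
          = (Iio (1:ℝ)).indicator (fun t => P {ω | t * x < R ω}) t := by
        intro t ht
        by_cases ht1 : t < 1
        · rw [indicator_of_mem (mem_Iio.2 ht1)]
          congr 1
          ext ω
          simp only [mem_setOf_eq, lt_min_iff, ht1, true_and]
          rw [lt_div_iff₀ hxpos]
        · rw [indicator_of_notMem (by simpa using ht1)]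
          have : {ω | t < min 1 (R ω / x)} = ∅ := by
            ext ω
            simp only [mem_setOf_eq, mem_empty_iff_false, iff_false, not_lt, lt_min_iff,
              not_and]
            intro h; linarith
          rw [this]; simp
      rw [setLIntegral_congr_fun measurableSet_Ioi hind,
        lintegral_indicator measurableSet_Iio,
        Measure.restrict_restrict measurableSet_Iio, Set.inter_comm, Set.Ioi_inter_Iio]
    have hInt : Integrable (fun t => G (t * x)) (volume.restrict (Ioo (0:ℝ) 1)) := by
      refine (integrable_const (1:ℝ)).mono'
        ((hGmeas.comp (measurable_id.mul_const x)).aestronglyMeasurable) ?_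
      exact ae_of_all _ fun t => by
        rw [Real.norm_eq_abs, abs_of_nonneg (hG0 _)]; exact hG1 _
    have h7 : ∫⁻ t in Ioo (0:ℝ) 1, P {ω | t * x < R ω}
        = ENNReal.ofReal (∫ t in Ioo (0:ℝ) 1, G (t * x)) := by
      rw [ofReal_integral_eq_lintegral_ofReal hInt (ae_of_all _ fun t => hG0 _)]
      apply lintegral_congr fun t => ?_
      exact (ENNReal.ofReal_toReal (measure_ne_top P _)).symm
    have h8 : (P {ω | x < R ω * W ω}).toReal = ∫ t in Ioo (0:ℝ) 1, G (t * x) := by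
      rw [h1, h2, h3, h4, h5, h6, h7, ENNReal.toReal_ofReal]
      exact integral_nonneg fun t => hG0 _
    rw [h8]
    have h9 : ∫ t in Ioo (0:ℝ) 1, G (t * x) = ∫ t in (0:ℝ)..1, G (t * x) := by
      rw [intervalIntegral.integral_of_le zero_le_one, integral_Ioc_eq_integral_Ioo]
    rw [h9, intervalIntegral.integral_comp_mul_right G hxpos.ne']
    simp [smul_eq_mul]
  -- limit of G s * s
  have hlim : Tendsto (fun s => G s * s) atTop (nhds cR) := by
    have h := hRtail.const_mul cR
    rw [mul_one] at h
    apply h.congr'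
    filter_upwards [eventually_gt_atTop (0:ℝ)] with x hxpos
    rw [hGdef]
    field_simp
  have hkey := key_asymp G hGanti hG0 hG1 cR hcR hlim
  refine hkey.congr' ?_
  filter_upwards [eventually_ge_atTop (1:ℝ)] with x hx
  have hxpos : 0 < x := lt_of_lt_of_le one_pos hx
  rw [key_id x hx, show cR * x⁻¹ * Real.log x = x⁻¹ * (cR * Real.log x) by ring,
    mul_div_mul_left _ _ (inv_ne_zero hxpos.ne')]
end
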